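/- With A₁ = A₂ = 0, B₁ = (1/√2)[[0,1],[1,0]] and B₂ = (1/√2)[[1,0],[0,-1]], the sectional curvature numerator K̂ = (1/8)‖[A₁,A₂] + B₂ᵀB₁ - B₁ᵀB₂‖_F² + (1/4)‖B₁A₂ - B₂A₁‖_F² + (1/2)‖B₁B₂ᵀ - B₂B₁ᵀ‖_F² equals 5/4. -/

import Mathlib

open Matrix

/-- Squared Frobenius norm of a real matrix. -/
def frobSq {m p : ℕ} (M : Matrix (Fin m) (Fin p) ℝ) : ℝ := ∑ i, ∑ j, (M i j) ^ 2

/-- With `A₁ = A₂ = 0`, `B₁ = (1/√2)[[0,1],[1,0]]`, `B₂ = (1/√2)[[1,0],[0,-1]]`,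
the sectional curvature numerator
`K̂ = (1/8)‖[A₁,A₂] + B₂ᵀB₁ - B₁ᵀB₂‖_F² + (1/4)‖B₁A₂ - B₂A₁‖_F² + (1/2)‖B₁B₂ᵀ - B₂B₁ᵀ‖_F²`
equals `5/4`. -/
theorem curvature_numerator_max (A₁ A₂ B₁ B₂ : Matrix (Fin 2) (Fin 2) ℝ)
    (hA₁ : A₁ = 0) (hA₂ : A₂ = 0)
    (hB₁ : B₁ = (1 / Real.sqrt 2) • !![0, 1; 1, 0])
    (hB₂ : B₂ = (1 / Real.sqrt 2) • !![1, 0; 0, -1]) :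
    (1 / 8 : ℝ) * frobSq ((A₁ * A₂ - A₂ * A₁) + B₂ᵀ * B₁ - B₁ᵀ * B₂) +
      (1 / 4 : ℝ) * frobSq (B₁ * A₂ - B₂ * A₁) +
      (1 / 2 : ℝ) * frobSq (B₁ * B₂ᵀ - B₂ * B₁ᵀ) = 5 / 4 := by
  have h2 : Real.sqrt 2 ^ 2 = 2 := Real.sq_sqrt (by norm_num)
  have hne : Real.sqrt 2 ≠ 0 := by positivity
  subst hA₁ hA₂ hB₁ hB₂
  simp only [frobSq, Fin.sum_univ_two, Matrix.mul_apply, Matrix.smul_apply,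
    Matrix.sub_apply, Matrix.add_apply, Matrix.transpose_apply, Matrix.zero_apply,
    Matrix.cons_val_zero, Matrix.cons_val_one, Matrix.head_cons, Matrix.head_fin_const,
    Matrix.cons_val', Matrix.empty_val', Matrix.cons_val_fin_one, smul_eq_mul, Matrix.of_apply]
  field_simp
  ring_nf
  linear_combination (-(Real.sqrt 2 ^ 2 + 2) * 80) * h2
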